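/- Let q be a prime power, h ≥ 3, F = F_{q^2}. Fix g₂ ∈ F with g₂ ∉ F_q and ε ∈ F. The number of tuples (x₁,x₂,x₃,x₄) ∈ F̄_q⁴ satisfying x₁^{q²} = x₁, x₂^{q²} = x₂, x₃^{q²} − x₃ = (g₂^q − g₂)x₁, x₄^{q²} − x₄ = x₁^q(x₃^{q²} − x₃), and x₄^{q²} − x₄ = ε equals q⁶ if ε = 0, equals q⁶(q+1) if ε ≠ 0 and Tr_{F/F_q}(ε) = 0, and equals 0 otherwise. -/
import Mathlib


open scoped Classical

open Polynomial in
lemma aux_root_set_ncard {K : Type} [Field K] [IsAlgClosed K] (f : K[X]) (hf0 : f ≠ 0)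
    (hsep : f.Separable) : {x : K | Polynomial.eval x f = 0}.ncard = f.natDegree := by
  classical
  have h1 : {x : K | Polynomial.eval x f = 0} = ↑f.roots.toFinset := by
    ext x
    simp [Polynomial.mem_roots, hf0, Polynomial.IsRoot]
  rw [h1, Set.ncard_coe_finset, Multiset.toFinset_card_of_nodup (Polynomial.nodup_roots hsep),
    Polynomial.splits_iff_card_roots.mp (IsAlgClosed.splits f)]

open Polynomial in
lemma aux_AS_ncard {K : Type} [Field K] [IsAlgClosed K] {n : ℕ} (hn : 1 < n)
    (hnK : ((n : ℕ) : K) = 0) (c : K) : {x : K | x ^ n - x = c}.ncard = n := by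
  classical
  have hdeg : (X ^ n - X - C c : K[X]).natDegree = n := by
    rw [natDegree_sub_C, natDegree_sub_eq_left_of_natDegree_lt (by simpa using hn),
      natDegree_X_pow]
  have hf0 : (X ^ n - X - C c : K[X]) ≠ 0 := by
    intro h
    rw [h, natDegree_zero] at hdeg
    omega
  have hder : derivative (X ^ n - X - C c : K[X]) = -1 := by
    simp [derivative_X_pow, hnK]
  have hsep : (X ^ n - X - C c : K[X]).Separable := by
    rw [Polynomial.Separable, hder]
    exact (isCoprime_one_right).neg_right
  have h2 : {x : K | x ^ n - x = c} = {x : K | Polynomial.eval x (X ^ n - X - C c : K[X]) = 0} := by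
    ext x
    simp only [Set.mem_setOf_eq, eval_sub, eval_pow, eval_X, eval_C]
    constructor <;> intro hh <;> linear_combination hh
  rw [h2, aux_root_set_ncard _ hf0 hsep, hdeg]

open Polynomial in
lemma aux_Kummer_ncard {K : Type} [Field K] [IsAlgClosed K] {n : ℕ} (hn : 0 < n)
    (hnK : ((n : ℕ) : K) ≠ 0) {a : K} (ha : a ≠ 0) : {x : K | x ^ n = a}.ncard = n := by
  classical
  have h2 : {x : K | x ^ n = a} = {x : K | Polynomial.eval x (X ^ n - C a : K[X]) = 0} := by
    ext x; simp [sub_eq_zero]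
  rw [h2, aux_root_set_ncard _ (X_pow_sub_C_ne_zero hn a) (separable_X_pow_sub_C a hnK ha),
    natDegree_X_pow_sub_C]

lemma aux_ncard_prod {α β : Type*} (s : Set α) (t : Set β) :
    (s ×ˢ t).ncard = s.ncard * t.ncard := by
  rw [← Nat.card_coe_set_eq, ← Nat.card_coe_set_eq, ← Nat.card_coe_set_eq,
    Nat.card_congr (Equiv.Set.prod s t), Nat.card_prod]

/-- Over F̄_q, fixing g₂ ∈ F_{q²} \ F_q and ε ∈ F_{q²}, the number of
tuples (x₁,x₂,x₃,x₄) with x₁^{q²}=x₁, x₂^{q²}=x₂, x₃^{q²}−x₃ = (g₂^q−g₂)x₁,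
x₄^{q²}−x₄ = x₁^q(x₃^{q²}−x₃) and x₄^{q²}−x₄ = ε equals q⁶ if ε = 0,
q⁶(q+1) if 0 ≠ ε ∈ ker(Tr), and 0 otherwise. -/
theorem stmt_16 (p m q h : ℕ) (hp : p.Prime) (hm : 0 < m) (hq : q = p ^ m) (hh : 3 ≤ h)
    (K : Type) [Field K] [IsAlgClosed K] [CharP K p]
    (g₂ : K) (hg₂F : g₂ ^ (q ^ 2) = g₂) (hg₂ : g₂ ^ q ≠ g₂)
    (ε : K) (hεF : ε ^ (q ^ 2) = ε) :
    Set.ncard {x : K × K × K × K |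
        x.1 ^ (q ^ 2) = x.1 ∧
        x.2.1 ^ (q ^ 2) = x.2.1 ∧
        x.2.2.1 ^ (q ^ 2) - x.2.2.1 = (g₂ ^ q - g₂) * x.1 ∧
        x.2.2.2 ^ (q ^ 2) - x.2.2.2 = x.1 ^ q * (x.2.2.1 ^ (q ^ 2) - x.2.2.1) ∧
        x.2.2.2 ^ (q ^ 2) - x.2.2.2 = ε} =
      if ε = 0 then q ^ 6 else if ε + ε ^ q = 0 then q ^ 6 * (q + 1) else 0 := by
  classical
  haveI := Fact.mk hp
  -- basic numeric facts
  have hq1 : 1 < q := by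
    rw [hq]; exact Nat.one_lt_pow hm.ne' hp.one_lt
  have hq2 : 1 < q ^ 2 := by nlinarith
  have hqK : ((q : ℕ) : K) = 0 := by
    rw [hq]; push_cast
    simp [CharP.cast_eq_zero K p, zero_pow hm.ne']
  have hq2K : ((q ^ 2 : ℕ) : K) = 0 := by push_cast [hqK]; ring
  have hq1K : ((q + 1 : ℕ) : K) ≠ 0 := by push_cast [hqK]; simp
  -- Frobenius facts
  have hfrob_sub : ∀ x y : K, (x - y) ^ q = x ^ q - y ^ q := by
    intro x y; rw [hq]; exact sub_pow_char_pow x y m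
  have hfrob_add2 : ∀ x y : K, (x + y) ^ q ^ 2 = x ^ q ^ 2 + y ^ q ^ 2 := by
    intro x y
    rw [hq, ← pow_mul]; exact add_pow_char_pow x y p (m * 2)
  have hfrob_sub2 : ∀ x y : K, (x - y) ^ q ^ 2 = x ^ q ^ 2 - y ^ q ^ 2 := by
    intro x y
    rw [hq, ← pow_mul]; exact sub_pow_char_pow x y (m * 2)
  set d : K := g₂ ^ q - g₂ with hd_def
  have hd : d ≠ 0 := sub_ne_zero_of_ne hg₂
  have hdq : d ^ q = -d := by
    rw [hd_def, hfrob_sub, ← pow_mul, ← pow_two, hg₂F]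
    ring
  -- the Artin–Schreier section
  have hsol : ∀ c : K, ∃ y : K, y ^ q ^ 2 - y = c := by
    intro c
    by_contra hcon
    push_neg at hcon
    have hemp : {x : K | x ^ q ^ 2 - x = c} = ∅ := by
      ext x; simpa using hcon x
    have h0 := aux_AS_ncard (K := K) hq2 hq2K c
    rw [hemp, Set.ncard_empty] at h0
    omega
  set s : K → K := fun c => (hsol c).choose with hs_def
  have hs : ∀ c : K, (s c) ^ q ^ 2 - s c = c := fun c => (hsol c).choose_spec
  -- the sets
  set A : Set K := {x : K | x ^ q ^ 2 = x ∧ d * x ^ (q + 1) = ε} with hA_def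
  set B : Set K := {x : K | x ^ q ^ 2 - x = 0} with hB_def
  set D : Set K := {x : K | x ^ q ^ 2 - x = ε} with hD_def
  set S : Set (K × K × K × K) := {x : K × K × K × K |
        x.1 ^ (q ^ 2) = x.1 ∧
        x.2.1 ^ (q ^ 2) = x.2.1 ∧
        x.2.2.1 ^ (q ^ 2) - x.2.2.1 = d * x.1 ∧
        x.2.2.2 ^ (q ^ 2) - x.2.2.2 = x.1 ^ q * (x.2.2.1 ^ (q ^ 2) - x.2.2.1) ∧
        x.2.2.2 ^ (q ^ 2) - x.2.2.2 = ε} with hS_def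
  set T : Set (K × K × K × K) := A ×ˢ B ×ˢ B ×ˢ D with hT_def
  set f : K × K × K × K → K × K × K × K :=
    fun x => (x.1, x.2.1, x.2.2.1 - s (d * x.1), x.2.2.2) with hf_def
  have hinj : Set.InjOn f S := by
    intro x _ y _ hxy
    obtain ⟨x₁, x₂, x₃, x₄⟩ := x
    obtain ⟨y₁, y₂, y₃, y₄⟩ := y
    simp only [hf_def, Prod.mk.injEq] at hxy
    obtain ⟨h1, h2, h3, h4⟩ := hxy
    subst h1 h2 h4
    have hx3 : x₃ = y₃ := by linear_combination h3
    simp [hx3]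
  have himg : f '' S = T := by
    ext y
    constructor
    · rintro ⟨⟨x₁, x₂, x₃, x₄⟩, ⟨h1, h2, h3, h4, h5⟩, rfl⟩
      refine ⟨⟨h1, ?_⟩, ?_, ?_, ?_⟩
      · rw [pow_succ, ← mul_assoc, mul_comm d (x₁ ^ q), mul_assoc, ← h3, ← h4, h5]
      · show x₂ ^ q ^ 2 - x₂ = 0
        rw [sub_eq_zero]; exact h2
      · show (x₃ - s (d * x₁)) ^ q ^ 2 - (x₃ - s (d * x₁)) = 0
        rw [hfrob_sub2]
        linear_combination h3 - hs (d * x₁)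
      · exact h5
    · rintro ⟨h1, h2, h3, h4⟩
      obtain ⟨y₁, y₂, y₃, y₄⟩ := y
      have h1' : y₁ ^ q ^ 2 = y₁ ∧ d * y₁ ^ (q + 1) = ε := h1
      have h2' : y₂ ^ q ^ 2 - y₂ = 0 := h2
      have h3' : y₃ ^ q ^ 2 - y₃ = 0 := h3
      have h4' : y₄ ^ q ^ 2 - y₄ = ε := h4
      have hu := hs (d * y₁)
      have hc3 : (y₃ + s (d * y₁)) ^ q ^ 2 - (y₃ + s (d * y₁)) = d * y₁ := by
        rw [hfrob_add2]; linear_combination h3' + hu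
      refine ⟨(y₁, y₂, y₃ + s (d * y₁), y₄), ⟨h1'.1, ?_, hc3, ?_, h4'⟩, ?_⟩
      · rw [sub_eq_zero] at h2'; exact h2'
      · rw [hc3, h4', ← h1'.2, pow_succ]
        ring
      · show (y₁, y₂, y₃ + s (d * y₁) - s (d * y₁), y₄) = (y₁, y₂, y₃, y₄)
        simp
  have hBcard : B.ncard = q ^ 2 := by
    rw [hB_def]; exact aux_AS_ncard hq2 hq2K 0
  have hDcard : D.ncard = q ^ 2 := by
    rw [hD_def]; exact aux_AS_ncard hq2 hq2K ε
  have hScard : S.ncard = A.ncard * q ^ 6 := by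
    rw [← Set.ncard_image_of_injOn hinj, himg, hT_def, aux_ncard_prod, aux_ncard_prod,
      aux_ncard_prod, hBcard, hDcard]
    ring
  rw [hScard]
  by_cases hε : ε = 0
  · have hA1 : A = {0} := by
      ext x
      simp only [hA_def, Set.mem_setOf_eq, Set.mem_singleton_iff, hε]
      constructor
      · rintro ⟨-, h2⟩
        have hx : x ^ (q + 1) = 0 := by
          rcases mul_eq_zero.mp h2 with h' | h'
          · exact absurd h' hd
          · exact h'
        exact pow_eq_zero_iff (by omega) |>.mp hx
      · rintro rfl
        constructor
        · rw [zero_pow (pow_ne_zero 2 (by omega : q ≠ 0))]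
        · rw [zero_pow (by omega : q + 1 ≠ 0), mul_zero]
    rw [hA1, Set.ncard_singleton, hε, if_pos rfl, one_mul]
  · rw [if_neg hε]
    by_cases htr : ε + ε ^ q = 0
    · rw [if_pos htr]
      have ha0 : ε / d ≠ 0 := div_ne_zero hε hd
      have hεq : ε ^ q = -ε := by linear_combination htr
      have haq : (ε / d) ^ q = ε / d := by
        rw [div_pow, hdq, hεq, neg_div_neg_eq]
      have hA2 : A = {x : K | x ^ (q + 1) = ε / d} := by
        ext x
        simp only [hA_def, Set.mem_setOf_eq]
        constructor
        · rintro ⟨-, h2⟩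
          field_simp
          linear_combination h2
        · intro hx
          have hx0 : x ≠ 0 := by
            intro h0
            rw [h0, zero_pow (by omega : q + 1 ≠ 0)] at hx
            exact ha0 hx.symm
          refine ⟨?_, ?_⟩
          · have hxq2 : x ^ q ^ 2 = (x ^ (q + 1)) ^ (q - 1) * x := by
              rw [← pow_mul, ← pow_succ]
              congr 1
              have hqq : (q + 1) * (q - 1) + 1 = q ^ 2 := by
                obtain ⟨n, rfl⟩ : ∃ n, q = n + 1 := ⟨q - 1, by omega⟩
                show (n + 1 + 1) * (n + 1 - 1) + 1 = (n + 1) ^ 2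
                simp only [Nat.add_sub_cancel]
                ring
              rw [hqq]
            have hpow : (ε / d) ^ (q - 1) = 1 := by
              have h1 : (ε / d) ^ (q - 1) * (ε / d) = (ε / d) ^ q := by
                rw [← pow_succ]
                congr 1
                omega
              rw [haq] at h1
              exact mul_right_cancel₀ ha0 (h1.trans (one_mul _).symm)
            rw [hxq2, hx, hpow, one_mul]
          · rw [hx]
            field_simp
      rw [hA2, aux_Kummer_ncard (by omega) hq1K ha0]
      ring
    · rw [if_neg htr]
      have hA3 : A = ∅ := by
        ext x
        simp only [hA_def, Set.mem_setOf_eq, Set.mem_empty_iff_false, iff_false]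
        rintro ⟨h1, h2⟩
        apply htr
        have haq : (x ^ (q + 1)) ^ q = x ^ (q + 1) := by
          rw [← pow_mul]
          have hh2 : (q + 1) * q = q ^ 2 + q := by ring
          rw [hh2, pow_add, h1, ← pow_succ']
        calc ε + ε ^ q = d * x ^ (q + 1) + (d * x ^ (q + 1)) ^ q := by rw [h2]
          _ = d * x ^ (q + 1) + d ^ q * (x ^ (q + 1)) ^ q := by rw [mul_pow]
          _ = d * x ^ (q + 1) + (-d) * x ^ (q + 1) := by rw [hdq, haq]
          _ = 0 := by ring
      rw [hA3, Set.ncard_empty, zero_mul]
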